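/- Let V ⊆ ℝ with |V| = n, let u, v ∈ V, let φ: {u, v} → ℝ with |u − v| = |φ(u) − φ(v)|, and let s ≤ (ln n)/50. Form a path P = u = v₀, v₁, ..., v_s = v whose internal vertices are chosen uniformly at random (without repetition) from V. Then the probability that φ extends to a P-rigid map in a non-trivial way is at most 1/√n. -/

import Mathlib

open Finset Function

lemma telescope {n : ℕ} (f : Fin (n+1) → ℝ) :
    ∑ i : Fin n, (f i.succ - f i.castSucc) = f (Fin.last n) - f 0 := by
  set F : ℕ → ℝ := fun k => f ⟨min k n, by omega⟩ with hF
  have key : ∀ i : Fin n, f i.succ - f i.castSucc = F (i.val + 1) - F i.val := by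
    intro i
    have e1 : F (i.val + 1) = f i.succ := by
      rw [hF]; beta_reduce; congr 1
      apply Fin.ext
      simp only [Fin.val_mk, Fin.val_succ]
      have := i.isLt; omega
    have e2 : F i.val = f i.castSucc := by
      rw [hF]; beta_reduce; congr 1
      apply Fin.ext
      simp only [Fin.val_mk, Fin.coe_castSucc]
      have := i.isLt; omega
    rw [e1, e2]
  have eN : F n = f (Fin.last n) := by
    rw [hF]; beta_reduce; congr 1
    apply Fin.ext
    simp only [Fin.val_mk, Fin.val_last]
    omega
  have e0 : F 0 = f 0 := by
    rw [hF]; beta_reduce; congr 1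
  calc ∑ i : Fin n, (f i.succ - f i.castSucc)
      = ∑ i : Fin n, (F (i.val + 1) - F i.val) := Finset.sum_congr rfl fun i _ => key i
    _ = ∑ i ∈ Finset.range n, (F (i + 1) - F i) :=
        Fin.sum_univ_eq_sum_range (fun k => F (k+1) - F k) n
    _ = F n - F 0 := Finset.sum_range_sub F n
    _ = f (Fin.last n) - f 0 := by rw [eN, e0]

lemma trivial_of_const {n : ℕ} (f g : Fin (n+1) → ℝ)
    (h : ∀ i : Fin n, f i.succ - f i.castSucc = g i.succ - g i.castSucc) :
    ∀ i, f i = g i + (f 0 - g 0) := by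
  intro i
  induction i using Fin.induction with
  | zero => ring
  | succ i ih => have := h i; linarith

lemma trivial_of_const_neg {n : ℕ} (f g : Fin (n+1) → ℝ)
    (h : ∀ i : Fin n, f i.succ - f i.castSucc = -(g i.succ - g i.castSucc)) :
    ∀ i, f i = (f 0 + g 0) - g i := by
  intro i
  induction i using Fin.induction with
  | zero => ring
  | succ i ih => have := h i; linarith

noncomputable def jfind {t : ℕ} (e : Fin (t + 2) → Bool) : ℕ := by
  classical
  exact if h : ∃ k, ∃ hk : k < t + 2, e ⟨k, hk⟩ ≠ e 0 then Nat.find h else 1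

lemma jfind_spec {t : ℕ} (e : Fin (t + 2) → Bool) (hne : ∃ i, e i ≠ e 0) :
    ∃ hlt : jfind e < t + 2, 1 ≤ jfind e ∧ e ⟨jfind e, hlt⟩ ≠ e 0 ∧
      ∀ hlt' : jfind e - 1 < t + 2, e ⟨jfind e - 1, hlt'⟩ = e 0 := by
  classical
  obtain ⟨i, hi⟩ := hne
  have hex : ∃ k, ∃ hk : k < t + 2, e ⟨k, hk⟩ ≠ e 0 := ⟨i.val, i.isLt, by simpa using hi⟩
  have hjfeq : jfind e = Nat.find hex := by
    unfold jfind
    rw [dif_pos hex]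
  obtain ⟨hlt, hne0⟩ := Nat.find_spec hex
  have h1 : 1 ≤ Nat.find hex := by
    rcases Nat.eq_zero_or_pos (Nat.find hex) with h | h
    · exfalso
      apply hne0
      congr 1
      exact Fin.ext (by simp [h])
    · exact h
  rw [hjfeq]
  refine ⟨hlt, h1, hne0, ?_⟩
  intro hlt'
  have hmin := Nat.find_min hex (m := Nat.find hex - 1) (by omega)
  push_neg at hmin
  exact hmin hlt'

noncomputable def pathVert (u v : ℝ) (s : ℕ) (g : Fin (s - 1) → ℝ) :
    Fin (s + 1) → ℝ :=
  fun i =>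
    if h0 : i.val = 0 then u
    else if hs : i.val = s then v
    else g ⟨i.val - 1, by have := i.isLt; omega⟩

lemma pathVert_zero (u v : ℝ) (s : ℕ) (g : Fin (s - 1) → ℝ) (i : Fin (s + 1))
    (h0 : i.val = 0) : pathVert u v s g i = u := dif_pos h0

lemma pathVert_last (u v : ℝ) (s : ℕ) (g : Fin (s - 1) → ℝ) (i : Fin (s + 1))
    (h0 : i.val ≠ 0) (hs : i.val = s) : pathVert u v s g i = v := by
  unfold pathVert; rw [dif_neg h0, dif_pos hs]

lemma pathVert_mid (u v : ℝ) (s : ℕ) (g : Fin (s - 1) → ℝ) (i : Fin (s + 1))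
    (h0 : i.val ≠ 0) (hs : i.val ≠ s) (hh : i.val - 1 < s - 1) :
    pathVert u v s g i = g ⟨i.val - 1, hh⟩ := by
  unfold pathVert; rw [dif_neg h0, dif_neg hs]

lemma determine {t : ℕ} {W : Type*} (b b' : Fin (t + 1) ↪ W) (f : W → ℝ)
    (hfinj : Function.Injective f) (u v D : ℝ) (e : Fin (t + 2) → Bool) (j : ℕ)
    (hjlt : j < t + 2) (hj1 : 1 ≤ j) (hjne : e ⟨j, hjlt⟩ ≠ e 0)
    (hjprev : e ⟨j - 1, by omega⟩ = e 0)
    (hoff : ∀ i : Fin (t + 1), (i : ℕ) ≠ j - 1 → b i = b' i)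
    (hsum : ∑ i : Fin (t + 2), (if e i then (1:ℝ) else -1) *
      (pathVert u v (t + 2) (fun l => f (b l)) i.succ -
        pathVert u v (t + 2) (fun l => f (b l)) i.castSucc) = D)
    (hsum' : ∑ i : Fin (t + 2), (if e i then (1:ℝ) else -1) *
      (pathVert u v (t + 2) (fun l => f (b' l)) i.succ -
        pathVert u v (t + 2) (fun l => f (b' l)) i.castSucc) = D) :
    b = b' := by
  set Xb := pathVert u v (t + 2) (fun l => f (b l)) with hXb
  set Xb' := pathVert u v (t + 2) (fun l => f (b' l)) with hXb'
  set w : Fin (t + 2) → ℝ := fun i => if e i then (1:ℝ) else -1 with hw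
  set jF : Fin (t + 2 + 1) := ⟨j, by omega⟩ with hjF
  set d : ℝ := Xb jF - Xb' jF with hd
  have hXoff : ∀ i : Fin (t + 2 + 1), i.val ≠ j → Xb i = Xb' i := by
    intro i hij
    rw [hXb, hXb']
    by_cases h0 : i.val = 0
    · rw [pathVert_zero _ _ _ _ _ h0, pathVert_zero _ _ _ _ _ h0]
    · by_cases hs : i.val = t + 2
      · rw [pathVert_last _ _ _ _ _ h0 hs, pathVert_last _ _ _ _ _ h0 hs]
      · have hh : i.val - 1 < t + 2 - 1 := by have := i.isLt; omega
        rw [pathVert_mid _ _ _ _ _ h0 hs hh, pathVert_mid _ _ _ _ _ h0 hs hh]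
        refine congrArg _ (hoff _ ?_)
        simp only [Fin.val_mk]
        omega
  have hD : ∀ i : Fin (t + 2 + 1), Xb i - Xb' i = if i.val = j then d else 0 := by
    intro i
    by_cases h : i.val = j
    · have hi : i = jF := Fin.ext (by simpa [hjF] using h)
      rw [if_pos h, hi, hd]
    · rw [if_neg h, sub_eq_zero]
      exact hXoff i h
  have hzero : (∑ i : Fin (t + 2), w i * (if ((i.succ : Fin (t + 2 + 1))).val = j then d else 0))
      - (∑ i : Fin (t + 2), w i * (if ((i.castSucc : Fin (t + 2 + 1))).val = j then d else 0))
      = 0 := by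
    rw [← Finset.sum_sub_distrib]
    have hterm : ∀ i : Fin (t + 2),
        w i * (if ((i.succ : Fin (t + 2 + 1))).val = j then d else 0)
          - w i * (if ((i.castSucc : Fin (t + 2 + 1))).val = j then d else 0)
        = w i * (Xb i.succ - Xb i.castSucc) - w i * (Xb' i.succ - Xb' i.castSucc) := by
      intro i
      rw [← hD, ← hD]
      ring
    rw [Finset.sum_congr rfl fun i _ => hterm i, Finset.sum_sub_distrib, hsum, hsum',
      sub_self]
  have hA : ∑ i : Fin (t + 2), w i * (if ((i.succ : Fin (t + 2 + 1))).val = j then d else 0)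
      = w ⟨j - 1, by omega⟩ * d := by
    rw [Finset.sum_eq_single (⟨j - 1, by omega⟩ : Fin (t + 2))]
    · have hc : (((⟨j - 1, by omega⟩ : Fin (t + 2)).succ : Fin (t + 2 + 1))).val = j := by
        simp [Fin.val_succ]; omega
      rw [if_pos hc]
    · intro i _ hine
      rw [if_neg, mul_zero]
      intro hcon
      apply hine
      apply Fin.ext
      simp only [Fin.val_succ] at hcon
      simp
      omega
    · intro h; exact absurd (Finset.mem_univ _) h
  have hB : ∑ i : Fin (t + 2), w i * (if ((i.castSucc : Fin (t + 2 + 1))).val = j then d else 0)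
      = w ⟨j, hjlt⟩ * d := by
    rw [Finset.sum_eq_single (⟨j, hjlt⟩ : Fin (t + 2))]
    · have hc : (((⟨j, hjlt⟩ : Fin (t + 2)).castSucc : Fin (t + 2 + 1))).val = j := by simp
      rw [if_pos hc]
    · intro i _ hine
      rw [if_neg, mul_zero]
      intro hcon
      apply hine
      apply Fin.ext
      simp only [Fin.coe_castSucc] at hcon
      simp
      omega
    · intro h; exact absurd (Finset.mem_univ _) h
  have hfinal : (w ⟨j - 1, by omega⟩ - w ⟨j, hjlt⟩) * d = 0 := by
    rw [hA, hB] at hzero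
    ring_nf
    ring_nf at hzero
    linarith
  have hxy : e ⟨j, hjlt⟩ ≠ e ⟨j - 1, by omega⟩ := by
    rw [hjprev]
    exact hjne
  have hwne : w ⟨j - 1, by omega⟩ - w ⟨j, hjlt⟩ ≠ 0 := by
    rw [hw]
    cases hx : e ⟨j - 1, by omega⟩ <;> cases hy : e ⟨j, hjlt⟩
    · exact absurd (hy.trans hx.symm) hxy
    · simp [hx, hy]
      try norm_num
    · simp [hx, hy]
      try norm_num
    · exact absurd (hy.trans hx.symm) hxy
  have hd0 : d = 0 := by
    rcases mul_eq_zero.mp hfinal with h | h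
    · exact absurd h hwne
    · exact h
  have hvv : Xb jF = Xb' jF := by
    rw [hd] at hd0
    linarith
  have hjF0 : (jF : ℕ) ≠ 0 := by rw [hjF]; simp; omega
  have hjFs : (jF : ℕ) ≠ t + 2 := by rw [hjF]; simp; omega
  have hjFh : (jF : ℕ) - 1 < t + 2 - 1 := by rw [hjF]; simp; omega
  rw [hXb, hXb', pathVert_mid _ _ _ _ _ hjF0 hjFs hjFh,
    pathVert_mid _ _ _ _ _ hjF0 hjFs hjFh] at hvv
  have hatp : b ⟨(jF : ℕ) - 1, hjFh⟩ = b' ⟨(jF : ℕ) - 1, hjFh⟩ := hfinj hvv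
  apply DFunLike.ext
  intro i
  by_cases hi : (i : ℕ) = j - 1
  · have : i = ⟨(jF : ℕ) - 1, hjFh⟩ := by
      apply Fin.ext
      simp [hjF, hi]
    rw [this]
    exact hatp
  · exact hoff i hi

noncomputable def pidx (t : ℕ) (e : Fin (t + 2) → Bool) : Fin (t + 1) :=
  ⟨min (jfind e - 1) t, by omega⟩

lemma pidx_val (t : ℕ) (e : Fin (t + 2) → Bool) :
    (pidx t e : ℕ) = min (jfind e - 1) t := rfl

set_option maxHeartbeats 1000000 in
lemma card_bad_le (V : Finset ℝ) (u v φu φv : ℝ) (t : ℕ) :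
    Nat.card {g : Fin (t + 1) ↪ {x : ℝ // x ∈ V ∧ x ≠ u ∧ x ≠ v} //
        ∃ ψ : Fin (t + 2 + 1) → ℝ,
          ψ 0 = φu ∧ ψ (Fin.last (t + 2)) = φv ∧
          (∀ i : Fin (t + 2),
            |ψ i.succ - ψ i.castSucc| =
              |pathVert u v (t + 2) (fun j => (g j : ℝ)) i.succ -
                pathVert u v (t + 2) (fun j => (g j : ℝ)) i.castSucc|) ∧
          ¬ ∃ c : ℝ,
              (∀ i : Fin (t + 2 + 1), ψ i = pathVert u v (t + 2) (fun j => (g j : ℝ)) i + c) ∨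
              (∀ i : Fin (t + 2 + 1), ψ i = c - pathVert u v (t + 2) (fun j => (g j : ℝ)) i)} ≤
      2 ^ (t + 2) * (Nat.card {x : ℝ // x ∈ V ∧ x ≠ u ∧ x ≠ v}) ^ t := by
  classical
  set W := {x : ℝ // x ∈ V ∧ x ≠ u ∧ x ≠ v} with hWdef
  letI instW : Fintype W :=
    Fintype.subtype (V.filter fun x => x ≠ u ∧ x ≠ v) (fun x => by
      simp [Finset.mem_filter, and_assoc])
  have key : ∀ (g : Fin (t + 1) ↪ W),
      (∃ ψ : Fin (t + 2 + 1) → ℝ,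
        ψ 0 = φu ∧ ψ (Fin.last (t + 2)) = φv ∧
        (∀ i : Fin (t + 2),
          |ψ i.succ - ψ i.castSucc| =
            |pathVert u v (t + 2) (fun j => (g j : ℝ)) i.succ -
              pathVert u v (t + 2) (fun j => (g j : ℝ)) i.castSucc|) ∧
        ¬ ∃ c : ℝ,
            (∀ i : Fin (t + 2 + 1), ψ i = pathVert u v (t + 2) (fun j => (g j : ℝ)) i + c) ∨
            (∀ i : Fin (t + 2 + 1), ψ i = c - pathVert u v (t + 2) (fun j => (g j : ℝ)) i)) →
      ∃ e : Fin (t + 2) → Bool,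
        (∃ i, e i ≠ e 0) ∧
        ∑ i : Fin (t + 2), (if e i then (1:ℝ) else -1) *
          (pathVert u v (t + 2) (fun j => (g j : ℝ)) i.succ -
            pathVert u v (t + 2) (fun j => (g j : ℝ)) i.castSucc) = φv - φu := by
    intro g hPg
    obtain ⟨ψ, h0, hlast, hsteps, hnt⟩ := hPg
    set X : Fin (t + 2 + 1) → ℝ := pathVert u v (t + 2) (fun j => (g j : ℝ)) with hXdef
    set e : Fin (t + 2) → Bool :=
      fun i => decide (ψ i.succ - ψ i.castSucc = X i.succ - X i.castSucc) with he
    have hstep : ∀ i : Fin (t + 2), ψ i.succ - ψ i.castSucc =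
        (if e i then (1:ℝ) else -1) * (X i.succ - X i.castSucc) := by
      intro i
      by_cases hc : ψ i.succ - ψ i.castSucc = X i.succ - X i.castSucc
      · simp [he, hc]
      · have h2 := (abs_eq_abs.mp (hsteps i)).resolve_left hc
        simp [he, hc]
        linarith
    refine ⟨e, ?_, ?_⟩
    · by_contra hcon
      push_neg at hcon
      apply hnt
      cases hE : e 0 with
      | true =>
        have hstep' : ∀ i : Fin (t + 2), ψ i.succ - ψ i.castSucc =
            X i.succ - X i.castSucc := by
          intro i; rw [hstep i, hcon i, hE]; simp
        exact ⟨ψ 0 - X 0, Or.inl (trivial_of_const ψ X hstep')⟩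
      | false =>
        have hstep' : ∀ i : Fin (t + 2), ψ i.succ - ψ i.castSucc =
            -(X i.succ - X i.castSucc) := by
          intro i; rw [hstep i, hcon i, hE]; simp
        exact ⟨ψ 0 + X 0, Or.inr (trivial_of_const_neg ψ X hstep')⟩
    · have hsum : ∑ i : Fin (t + 2), (if e i then (1:ℝ) else -1) * (X i.succ - X i.castSucc)
          = ∑ i : Fin (t + 2), (ψ i.succ - ψ i.castSucc) :=
        Finset.sum_congr rfl fun i _ => (hstep i).symm
      rw [hsum, telescope ψ, h0, hlast]
  refine le_trans (Nat.card_le_card_of_injective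
    (β := (Fin (t + 2) → Bool) × (Fin t → W))
    (fun b => ((key b.1 b.2).choose,
      fun k => b.1 ((pidx t (key b.1 b.2).choose).succAbove k))) ?_) ?_
  · -- injectivity
    intro b b' hbb
    obtain ⟨hne, hsum⟩ := (key b.1 b.2).choose_spec
    obtain ⟨hne', hsum'⟩ := (key b'.1 b'.2).choose_spec
    dsimp only at hbb
    rw [Prod.mk.injEq] at hbb
    obtain ⟨hE, hG⟩ := hbb
    rw [← hE] at hsum' hG
    obtain ⟨hjlt, hj1, hjne, hjprev⟩ := jfind_spec (key b.1 b.2).choose hne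
    apply Subtype.ext
    refine determine b.1 b'.1 Subtype.val Subtype.val_injective u v (φv - φu)
      (key b.1 b.2).choose (jfind (key b.1 b.2).choose) hjlt hj1 hjne
      (hjprev (by omega)) ?_ hsum hsum'
    intro i hi
    have hipb : i ≠ pidx t (key b.1 b.2).choose := by
      intro hcon
      apply hi
      rw [hcon, pidx_val]
      omega
    obtain ⟨k, hk⟩ := Fin.exists_succAbove_eq hipb
    rw [← hk]
    exact congrFun hG k
  · -- cardinality of the codomain
    apply le_of_eq
    rw [Nat.card_prod, Nat.card_fun, Nat.card_fun]
    simp [Nat.card_eq_fintype_card]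
    exact congrArg (· ^ t) (Fintype.card_congr' rfl)

lemma arith (n m t : ℕ) (hn : 100 ≤ n) (hm1 : n - 2 ≤ m) (hm2 : m ≤ n)
    (hst : (t : ℝ) + 2 ≤ Real.log n / 50) :
    (2:ℝ) ^ (t + 2) * (m:ℝ) ^ t ≤ ((m.descFactorial (t + 1) : ℕ) : ℝ) / Real.sqrt n := by
  have hn100 : (100:ℝ) ≤ (n:ℝ) := by exact_mod_cast hn
  have hn0 : (0:ℝ) < n := by linarith
  have hL2 : (2:ℝ) ≤ Real.log n := by
    have h8 : Real.log 8 ≤ Real.log n :=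
      Real.log_le_log (by norm_num) (by exact_mod_cast (by omega : 8 ≤ n))
    have h8' : Real.log 8 = 3 * Real.log 2 := by
      rw [show (8:ℝ) = 2 ^ (3:ℕ) by norm_num, Real.log_pow]
      push_cast; ring
    have := Real.log_two_gt_d9
    linarith
  have hLn : Real.log n ≤ (n:ℝ) - 1 := Real.log_le_sub_one_of_pos hn0
  have hm1' : (n:ℝ) - 2 ≤ (m:ℝ) := by
    have : ((n - 2 : ℕ) : ℝ) ≤ (m:ℝ) := by exact_mod_cast hm1
    rwa [Nat.cast_sub (by omega)] at this
  have hmn : (m:ℝ) ≤ (n:ℝ) := by exact_mod_cast hm2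
  have htm : t ≤ m := by
    have : (t:ℝ) ≤ (m:ℝ) := by linarith
    exact_mod_cast this
  have hdesc : (m - t) ^ (t + 1) ≤ m.descFactorial (t + 1) := by
    have h := Nat.pow_sub_le_descFactorial m (t + 1)
    rwa [show m + 1 - (t + 1) = m - t by omega] at h
  rw [le_div_iff₀ (Real.sqrt_pos.mpr hn0)]
  refine le_trans ?_ (Nat.cast_le.mpr hdesc)
  rw [Nat.cast_pow, Nat.cast_sub htm]
  set M : ℝ := (m:ℝ) - (t:ℝ) with hMdef
  have hMn : (n:ℝ) / 2 ≤ M := by rw [hMdef]; linarith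
  have hM0 : (0:ℝ) < M := by linarith
  have h2M : (m:ℝ) ≤ 2 * M := by linarith
  have hpow : (m:ℝ) ^ t ≤ 2 ^ t * M ^ t := by
    calc (m:ℝ) ^ t ≤ (2 * M) ^ t := pow_le_pow_left₀ (by positivity) h2M t
      _ = 2 ^ t * M ^ t := mul_pow _ _ _
  have hkey : (2:ℝ) ^ (2 * t + 4) * Real.sqrt n ≤ M := by
    have hlog2 := Real.log_two_lt_d9
    have hlog2' := Real.log_two_gt_d9
    have hs : Real.sqrt n = Real.exp (Real.log n * (1 / 2)) := by
      rw [Real.sqrt_eq_rpow, Real.rpow_def_of_pos hn0]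
    have hp : (2:ℝ) ^ (2 * t + 4) = Real.exp (Real.log 2 * (2 * (t:ℝ) + 4)) := by
      rw [← Real.rpow_natCast 2 (2 * t + 4), Real.rpow_def_of_pos (by norm_num)]
      congr 1
      push_cast; ring
    rw [hp, hs, ← Real.exp_add]
    refine le_trans ?_ hMn
    rw [le_div_iff₀ (by norm_num : (0:ℝ) < 2)]
    have hmul : Real.log 2 * (2 * (t:ℝ) + 4) ≤ 0.7 * (2 * (t:ℝ) + 4) := by
      apply mul_le_mul_of_nonneg_right (by linarith)
      positivity
    calc Real.exp (Real.log 2 * (2 * (t:ℝ) + 4) + Real.log n * (1 / 2)) * 2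
        = Real.exp (Real.log 2 * (2 * (t:ℝ) + 4) + Real.log n * (1 / 2)) *
            Real.exp (Real.log 2) := by rw [Real.exp_log (by norm_num : (0:ℝ) < 2)]
      _ = Real.exp (Real.log 2 * (2 * (t:ℝ) + 4) + Real.log n * (1 / 2) + Real.log 2) :=
          (Real.exp_add _ _).symm
      _ ≤ Real.exp (Real.log n) := by
          apply Real.exp_le_exp.mpr
          linarith
      _ = (n:ℝ) := Real.exp_log hn0
  calc (2:ℝ) ^ (t + 2) * (m:ℝ) ^ t * Real.sqrt n
      ≤ (2:ℝ) ^ (t + 2) * (2 ^ t * M ^ t) * Real.sqrt n := by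
        apply mul_le_mul_of_nonneg_right
          (mul_le_mul_of_nonneg_left hpow (by positivity)) (Real.sqrt_nonneg _)
    _ = (2:ℝ) ^ (2 * t + 2) * Real.sqrt n * M ^ t := by
        rw [show (2:ℝ) ^ (t + 2) * (2 ^ t * M ^ t) * Real.sqrt n
            = ((2:ℝ) ^ (t + 2) * 2 ^ t) * M ^ t * Real.sqrt n from by ring,
          ← pow_add 2 (t + 2) t, show t + 2 + t = 2 * t + 2 from by omega]
        ring
    _ ≤ (2:ℝ) ^ (2 * t + 4) * Real.sqrt n * M ^ t := by
        apply mul_le_mul_of_nonneg_right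
          (mul_le_mul_of_nonneg_right (pow_le_pow_right₀ one_le_two (by omega))
            (Real.sqrt_nonneg _)) (by positivity)
    _ ≤ M * M ^ t := mul_le_mul_of_nonneg_right hkey (by positivity)
    _ = M ^ (t + 1) := by ring

/-- Let `V ⊆ ℝ` with `|V| = n`, `u, v ∈ V`, `φ` defined on `{u, v}` with
`|u − v| = |φ(u) − φ(v)|`, and `s ≤ ln n / 50`.  If the internal vertices of a path
from `u` to `v` of length `s` are chosen uniformly at random without repetition from
`V`, then the probability that `φ` extends to a `P`-rigid map in a *non-trivial* way
(i.e. not as a restriction of an isometry of `ℝ`) is at most `1/√n` (for all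
sufficiently large `n`).  Probability is expressed as a ratio of counts over the
uniformly random injection `g`. -/
theorem stmt_7 :
    ∃ N : ℕ, ∀ n : ℕ, N ≤ n → ∀ V : Finset ℝ, V.card = n →
      ∀ u v : ℝ, u ∈ V → v ∈ V → ∀ φu φv : ℝ,
        |u - v| = |φu - φv| →
        ∀ s : ℕ, 1 ≤ s → (s : ℝ) ≤ Real.log n / 50 →
        (Nat.card {g : Fin (s - 1) ↪ {x : ℝ // x ∈ V ∧ x ≠ u ∧ x ≠ v} //
            ∃ ψ : Fin (s + 1) → ℝ,
              ψ 0 = φu ∧ ψ (Fin.last s) = φv ∧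
              (∀ i : Fin s,
                |ψ i.succ - ψ i.castSucc| =
                  |pathVert u v s (fun j => (g j : ℝ)) i.succ -
                    pathVert u v s (fun j => (g j : ℝ)) i.castSucc|) ∧
              ¬ ∃ c : ℝ,
                  (∀ i : Fin (s + 1), ψ i = pathVert u v s (fun j => (g j : ℝ)) i + c) ∨
                  (∀ i : Fin (s + 1), ψ i = c - pathVert u v s (fun j => (g j : ℝ)) i)} : ℝ)
          ≤ (Nat.card (Fin (s - 1) ↪ {x : ℝ // x ∈ V ∧ x ≠ u ∧ x ≠ v}) : ℝ)
              / Real.sqrt n := by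
  classical
  use 100
  intro n hn V hV u v hu hv φu φv hφ s hs1 hslog
  have hn0 : 0 < n := by omega
  have hnR : (0:ℝ) < n := by exact_mod_cast hn0
  have hsqrt : 0 < Real.sqrt n := Real.sqrt_pos.mpr hnR
  rcases eq_or_lt_of_le hs1 with h1 | h2
  · -- s = 1 : the bad set is empty
    subst h1
    have hemp : IsEmpty {g : Fin (1 - 1) ↪ {x : ℝ // x ∈ V ∧ x ≠ u ∧ x ≠ v} //
        ∃ ψ : Fin (1 + 1) → ℝ,
          ψ 0 = φu ∧ ψ (Fin.last 1) = φv ∧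
          (∀ i : Fin 1,
            |ψ i.succ - ψ i.castSucc| =
              |pathVert u v 1 (fun j => (g j : ℝ)) i.succ -
                pathVert u v 1 (fun j => (g j : ℝ)) i.castSucc|) ∧
          ¬ ∃ c : ℝ,
              (∀ i : Fin (1 + 1), ψ i = pathVert u v 1 (fun j => (g j : ℝ)) i + c) ∨
              (∀ i : Fin (1 + 1), ψ i = c - pathVert u v 1 (fun j => (g j : ℝ)) i)} := by
      constructor
      rintro ⟨g, ψ, h0, hlast, hsteps, hnt⟩
      apply hnt
      have hp0 : pathVert u v 1 (fun j => (g j : ℝ)) 0 = u := pathVert_zero _ _ _ _ _ rfl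
      have hp1 : pathVert u v 1 (fun j => (g j : ℝ)) (Fin.last 1) = v :=
        pathVert_last _ _ _ _ _ (by norm_num) rfl
      have hone : (1 : Fin (1 + 1)) = Fin.last 1 := rfl
      rcases abs_eq_abs.mp hφ with h | h
      · refine ⟨φu - u, Or.inl ?_⟩
        intro i
        fin_cases i
        · beta_reduce
          rw [show (⟨0, by omega⟩ : Fin (1+1)) = 0 from rfl, h0, hp0]; ring
        · beta_reduce
          rw [show (⟨1, by omega⟩ : Fin (1+1)) = Fin.last 1 from rfl, hlast, hp1]; linarith
      · refine ⟨φu + u, Or.inr ?_⟩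
        intro i
        fin_cases i
        · beta_reduce
          rw [show (⟨0, by omega⟩ : Fin (1+1)) = 0 from rfl, h0, hp0]; ring
        · beta_reduce
          rw [show (⟨1, by omega⟩ : Fin (1+1)) = Fin.last 1 from rfl, hlast, hp1]; linarith
    haveI := hemp
    rw [Nat.card_of_isEmpty]
    push_cast
    positivity
  · -- 2 ≤ s
    obtain ⟨t, rfl⟩ : ∃ t, s = t + 2 := ⟨s - 2, by omega⟩
    letI instW : Fintype {x : ℝ // x ∈ V ∧ x ≠ u ∧ x ≠ v} :=
      Fintype.subtype (V.filter fun x => x ≠ u ∧ x ≠ v) (fun x => by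
        simp [Finset.mem_filter, and_assoc])
    set m := Nat.card {x : ℝ // x ∈ V ∧ x ≠ u ∧ x ≠ v} with hm
    have hmcard : m = (V.filter fun x => x ≠ u ∧ x ≠ v).card := by
      rw [hm, Nat.card_eq_fintype_card]
      exact Fintype.card_of_subtype _ (fun x => by simp [Finset.mem_filter, and_assoc])
    have hm2 : m ≤ n := by
      rw [hmcard, ← hV]
      exact Finset.card_le_card (Finset.filter_subset _ _)
    have hm1 : n - 2 ≤ m := by
      rw [hmcard, ← hV]
      have hsub : (V.erase u).erase v ⊆ V.filter (fun x => x ≠ u ∧ x ≠ v) := by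
        intro x hx
        simp only [Finset.mem_erase, Finset.mem_filter] at hx ⊢
        tauto
      have h1 := Finset.card_le_card hsub
      have h2 := Finset.pred_card_le_card_erase (s := V.erase u) (a := v)
      have h3 := Finset.pred_card_le_card_erase (s := V) (a := u)
      omega
    have hden : Nat.card (Fin (t + 2 - 1) ↪ {x : ℝ // x ∈ V ∧ x ≠ u ∧ x ≠ v})
        = m.descFactorial (t + 1) := by
      rw [Nat.card_eq_fintype_card, Fintype.card_embedding_eq, Fintype.card_fin, hm,
        Nat.card_eq_fintype_card]
      norm_num
    have hbad := card_bad_le V u v φu φv t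
    have harith := arith n m t hn hm1 hm2 (by push_cast at hslog ⊢; linarith)
    calc ((Nat.card {g : Fin (t + 2 - 1) ↪ {x : ℝ // x ∈ V ∧ x ≠ u ∧ x ≠ v} //
            ∃ ψ : Fin (t + 2 + 1) → ℝ,
              ψ 0 = φu ∧ ψ (Fin.last (t + 2)) = φv ∧
              (∀ i : Fin (t + 2),
                |ψ i.succ - ψ i.castSucc| =
                  |pathVert u v (t + 2) (fun j => (g j : ℝ)) i.succ -
                    pathVert u v (t + 2) (fun j => (g j : ℝ)) i.castSucc|) ∧
              ¬ ∃ c : ℝ,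
                  (∀ i : Fin (t + 2 + 1), ψ i =
                    pathVert u v (t + 2) (fun j => (g j : ℝ)) i + c) ∨
                  (∀ i : Fin (t + 2 + 1), ψ i =
                    c - pathVert u v (t + 2) (fun j => (g j : ℝ)) i)} : ℕ) : ℝ)
        ≤ ((2 ^ (t + 2) * m ^ t : ℕ) : ℝ) := Nat.cast_le.mpr hbad
      _ = (2:ℝ) ^ (t + 2) * (m:ℝ) ^ t := by push_cast; ring
      _ ≤ ((m.descFactorial (t + 1) : ℕ) : ℝ) / Real.sqrt n := harith
      _ = (Nat.card (Fin (t + 2 - 1) ↪ {x : ℝ // x ∈ V ∧ x ≠ u ∧ x ≠ v}) : ℝ)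
            / Real.sqrt n := by rw [hden]
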